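/- The real solutions (α₁,α₂,α₃,h) of the system X₁Y₂+X₂Y₁ = X₁Y₃+X₃Y₁ = X₂Y₃+X₃Y₂ = 0, where X₁ = h−α₃+α₁−α₂, X₂ = h−α₁+α₂−α₃, X₃ = h−α₂+α₃−α₁ and Y₁ = h+α₃−α₁+α₂, Y₂ = h+α₁−α₂+α₃, Y₃ = h+α₂−α₃+α₁, are exactly: (i) α₁=α₂=α₃=−h; (ii) α₁=α₂=α₃=h; (iii) some permutation with α_{σ(1)}=α_{σ(2)}, h=α_{σ(3)}=0; and no solution has exactly one of X₁,X₂,X₃ equal to zero with the other two nonzero. -/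
import Mathlib


/-!
STATEMENT 14: The real solutions `(α₁,α₂,α₃,h)` of the system
`X₁Y₂+X₂Y₁ = X₁Y₃+X₃Y₁ = X₂Y₃+X₃Y₂ = 0`, where
`X₁ = h−α₃+α₁−α₂`, `X₂ = h−α₁+α₂−α₃`, `X₃ = h−α₂+α₃−α₁`,
`Y₁ = h+α₃−α₁+α₂`, `Y₂ = h+α₁−α₂+α₃`, `Y₃ = h+α₂−α₃+α₁`,
are exactly: (i) `α₁=α₂=α₃=−h`; (ii) `α₁=α₂=α₃=h`; (iii) some cyclic permutation `σ` with
`α_{σ(1)}=α_{σ(2)}`, `h=α_{σ(3)}=0`.  Moreover no solution has exactly one of `X₁,X₂,X₃`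
equal to zero with the other two nonzero.
-/
theorem XY_system_solutions (α₁ α₂ α₃ h : ℝ) :
    let X₁ := h - α₃ + α₁ - α₂
    let X₂ := h - α₁ + α₂ - α₃
    let X₃ := h - α₂ + α₃ - α₁
    let Y₁ := h + α₃ - α₁ + α₂
    let Y₂ := h + α₁ - α₂ + α₃
    let Y₃ := h + α₂ - α₃ + α₁
    ((X₁ * Y₂ + X₂ * Y₁ = 0 ∧ X₁ * Y₃ + X₃ * Y₁ = 0 ∧ X₂ * Y₃ + X₃ * Y₂ = 0) ↔
      ((α₁ = α₂ ∧ α₂ = α₃ ∧ α₃ = -h) ∨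
       (α₁ = α₂ ∧ α₂ = α₃ ∧ α₃ = h) ∨
       (α₁ = α₂ ∧ h = 0 ∧ α₃ = 0) ∨
       (α₂ = α₃ ∧ h = 0 ∧ α₁ = 0) ∨
       (α₃ = α₁ ∧ h = 0 ∧ α₂ = 0))) ∧
    ((X₁ * Y₂ + X₂ * Y₁ = 0 ∧ X₁ * Y₃ + X₃ * Y₁ = 0 ∧ X₂ * Y₃ + X₃ * Y₂ = 0) →
      ¬ ((X₁ = 0 ∧ X₂ ≠ 0 ∧ X₃ ≠ 0) ∨
         (X₂ = 0 ∧ X₁ ≠ 0 ∧ X₃ ≠ 0) ∨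
         (X₃ = 0 ∧ X₁ ≠ 0 ∧ X₂ ≠ 0))) := by
  dsimp only
  have key : ((h - α₃ + α₁ - α₂) * (h + α₁ - α₂ + α₃) +
        (h - α₁ + α₂ - α₃) * (h + α₃ - α₁ + α₂) = 0 ∧
      (h - α₃ + α₁ - α₂) * (h + α₂ - α₃ + α₁) +
        (h - α₂ + α₃ - α₁) * (h + α₃ - α₁ + α₂) = 0 ∧
      (h - α₁ + α₂ - α₃) * (h + α₂ - α₃ + α₁) +
        (h - α₂ + α₃ - α₁) * (h + α₁ - α₂ + α₃) = 0) ↔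
      ((α₁ = α₂ ∧ α₂ = α₃ ∧ α₃ = -h) ∨
       (α₁ = α₂ ∧ α₂ = α₃ ∧ α₃ = h) ∨
       (α₁ = α₂ ∧ h = 0 ∧ α₃ = 0) ∨
       (α₂ = α₃ ∧ h = 0 ∧ α₁ = 0) ∨
       (α₃ = α₁ ∧ h = 0 ∧ α₂ = 0)) := by
    constructor
    · rintro ⟨h1, h2, h3⟩
      have e1 : h ^ 2 + (α₁ - α₂) ^ 2 = α₃ ^ 2 := by linear_combination h1 / 2
      have e2 : h ^ 2 + (α₁ - α₃) ^ 2 = α₂ ^ 2 := by linear_combination h2 / 2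
      have e3 : h ^ 2 + (α₂ - α₃) ^ 2 = α₁ ^ 2 := by linear_combination h3 / 2
      have p1 : (α₁ - α₂) * (α₁ + α₂ - α₃) = 0 := by linear_combination (e2 - e3) / 2
      have p2 : (α₂ - α₃) * (α₂ + α₃ - α₁) = 0 := by linear_combination (e1 - e2) / 2
      rcases mul_eq_zero.mp p1 with q1 | q1 <;> rcases mul_eq_zero.mp p2 with q2 | q2
      · -- α₁ = α₂, α₂ = α₃
        have hsq : (α₃ - h) * (α₃ + h) = 0 := by linear_combination -e1 + (α₁ - α₂) * q1
        rcases mul_eq_zero.mp hsq with q3 | q3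
        · exact Or.inr (Or.inl ⟨by linarith, by linarith, by linarith⟩)
        · exact Or.inl ⟨by linarith, by linarith, by linarith⟩
      · -- α₁ = α₂, α₂ + α₃ = α₁  ⇒ α₃ = 0
        have ha3 : α₃ = 0 := by linarith
        have hh : h * h = 0 := by linear_combination e1 - (α₁ - α₂) * q1 + α₃ * ha3
        have : h = 0 := by
          rcases mul_eq_zero.mp hh with t | t <;> exact t
        exact Or.inr (Or.inr (Or.inl ⟨by linarith, this, ha3⟩))
      · -- α₁ + α₂ = α₃, α₂ = α₃  ⇒ α₁ = 0
        have ha1 : α₁ = 0 := by linarith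
        have hh : h * h = 0 := by linear_combination e3 - (α₂ - α₃) * q2 + α₁ * ha1
        have : h = 0 := by
          rcases mul_eq_zero.mp hh with t | t <;> exact t
        exact Or.inr (Or.inr (Or.inr (Or.inl ⟨by linarith, this, ha1⟩)))
      · -- α₁ + α₂ = α₃, α₂ + α₃ = α₁ ⇒ α₂ = 0, α₁ = α₃
        have ha2 : α₂ = 0 := by linarith
        have ha13 : α₁ = α₃ := by linarith
        have hh : h * h = 0 := by
          linear_combination e1 - (α₁ - α₂ + α₃) * ha13 + (α₁ + α₃ - α₂) * ha2
        have : h = 0 := by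
          rcases mul_eq_zero.mp hh with t | t <;> exact t
        exact Or.inr (Or.inr (Or.inr (Or.inr ⟨ha13.symm, this, ha2⟩)))
    · rintro (⟨e, f, g⟩ | ⟨e, f, g⟩ | ⟨e, f, g⟩ | ⟨e, f, g⟩ | ⟨e, f, g⟩) <;>
        subst e <;> subst f <;> subst g <;>
        refine ⟨by ring, by ring, by ring⟩
  refine ⟨key, fun hsys hbad => ?_⟩
  rcases key.mp hsys with ⟨e, f, g⟩ | ⟨e, f, g⟩ | ⟨e, f, g⟩ | ⟨e, f, g⟩ | ⟨e, f, g⟩ <;>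
    rcases hbad with ⟨h0, h1, h2⟩ | ⟨h0, h1, h2⟩ | ⟨h0, h1, h2⟩ <;>
    first
      | exact h1 (by linarith)
      | exact h2 (by linarith)
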